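/- Let R be a commutative ring, n ≥ 2, G an abelian group, and φ : Um_n(R) → G a map satisfying MS1 (φ(vε) = φ(v) for every ε ∈ E_n(R) and v ∈ Um_n(R)) and MS4 (φ(f², a₂,…,aₙ)·φ(g, a₂,…,aₙ) = φ(f²g, a₂,…,aₙ) whenever all rows involved are unimodular). If φ satisfies MS3 (φ(x, a₂,…,aₙ)·φ(y, a₂,…,aₙ) = φ(xy, a₂,…,aₙ) whenever x + y = 1 and all rows involved are unimodular), then φ satisfies MS5: φ(r, a₂,…,aₙ)·φ(1+q, a₂,…,aₙ) = φ(q, a₂,…,aₙ) whenever r(1+q) ≡ q mod (a₂,…,aₙ) and all rows involved are unimodular. -/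
import Mathlib


/-- A row `v` of length `n` over a commutative ring is *unimodular* if there is a row `w`
with `∑ i, v i * w i = 1`. -/
def IsUnimodular {R : Type*} [CommRing R] {n : ℕ} (v : Fin n → R) : Prop :=
  ∃ w : Fin n → R, ∑ i, v i * w i = 1

/-- `ε` lies in the elementary group `E_n(R)`, i.e. the (sub)group of `GL_n(R)` generated by
the elementary matrices `e_{ij}(λ) = I + λ E_{ij}` (`i ≠ j`).  Since the generating set is
closed under inverses, this coincides with the multiplicative closure. -/
def IsElementary {R : Type*} [CommRing R] {n : ℕ} (ε : Matrix (Fin n) (Fin n) R) : Prop :=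
  ε ∈ Submonoid.closure {M : Matrix (Fin n) (Fin n) R |
    ∃ (i j : Fin n) (c : R), i ≠ j ∧ M = Matrix.transvection i j c}

/-- An `m × n` matrix is right invertible (i.e. lies in `Um_{m,n}(R)`) if it has a right
inverse. -/
def RightInvertible {R : Type*} [CommRing R] {m n : ℕ} (A : Matrix (Fin m) (Fin n) R) : Prop :=
  ∃ B : Matrix (Fin n) (Fin m) R, A * B = 1

/-- The stable range condition `sr_k(R)`. -/
def SRCond (R : Type*) [CommRing R] (k : ℕ) : Prop :=
  ∀ a : Fin (k + 1) → R, IsUnimodular a →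
    ∃ c : Fin k → R, IsUnimodular (fun i : Fin k => a i.castSucc + c i * a (Fin.last k))

section MennickeSymbolRelations

variable {R : Type*} [CommRing R] {G : Type*} [CommGroup G] {k : ℕ}

/-- `MS1`: invariance of `φ` under the right action of `E_n(R)` on unimodular rows. -/
def MS1 (φ : (Fin (k + 1) → R) → G) : Prop :=
  ∀ (v : Fin (k + 1) → R) (ε : Matrix (Fin (k + 1)) (Fin (k + 1)) R),
    IsUnimodular v → IsElementary ε → φ (Matrix.vecMul v ε) = φ v

/-- `MS3`: `φ(x,a)·φ(y,a) = φ(xy,a)` whenever `x + y = 1` and all rows involved are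
unimodular. -/
def MS3 (φ : (Fin (k + 1) → R) → G) : Prop :=
  ∀ (x y : R) (a : Fin k → R), x + y = 1 →
    IsUnimodular (Fin.cons x a) → IsUnimodular (Fin.cons y a) →
    IsUnimodular (Fin.cons (x * y) a) →
    φ (Fin.cons x a) * φ (Fin.cons y a) = φ (Fin.cons (x * y) a)

/-- `MS4`: `φ(f²,a)·φ(g,a) = φ(f²g,a)` whenever all rows involved are unimodular. -/
def MS4 (φ : (Fin (k + 1) → R) → G) : Prop :=
  ∀ (f g : R) (a : Fin k → R),
    IsUnimodular (Fin.cons (f ^ 2) a) → IsUnimodular (Fin.cons g a) →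
    IsUnimodular (Fin.cons (f ^ 2 * g) a) →
    φ (Fin.cons (f ^ 2) a) * φ (Fin.cons g a) = φ (Fin.cons (f ^ 2 * g) a)

/-- `MS5`: `φ(r,a)·φ(1+q,a) = φ(q,a)` whenever `r(1+q) ≡ q mod (a₂,…,aₙ)` and all rows
involved are unimodular. -/
def MS5 (φ : (Fin (k + 1) → R) → G) : Prop :=
  ∀ (r q : R) (a : Fin k → R),
    r * (1 + q) - q ∈ Ideal.span (Set.range a) →
    IsUnimodular (Fin.cons r a) → IsUnimodular (Fin.cons (1 + q) a) →
    IsUnimodular (Fin.cons q a) →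
    φ (Fin.cons r a) * φ (Fin.cons (1 + q) a) = φ (Fin.cons q a)

end MennickeSymbolRelations


section Aux

variable {R : Type*} [CommRing R] {G : Type*} [CommGroup G] {k : ℕ}

lemma isUnimodular_cons_iff {x : R} {a : Fin k → R} :
    IsUnimodular (Fin.cons x a) ↔ ∃ (b : R) (c : Fin k → R), x * b + ∑ i, a i * c i = 1 := by
  constructor
  · rintro ⟨w, hw⟩
    exact ⟨w 0, fun i => w i.succ, by simpa [Fin.sum_univ_succ] using hw⟩
  · rintro ⟨b, c, h⟩
    exact ⟨Fin.cons b c, by simpa [Fin.sum_univ_succ] using h⟩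

lemma unimod_congr {x y : R} {a : Fin k → R}
    (hxy : x - y ∈ Ideal.span (Set.range a)) (hy : IsUnimodular (Fin.cons y a)) :
    IsUnimodular (Fin.cons x a) := by
  obtain ⟨t, ht⟩ := (Submodule.mem_span_range_iff_exists_fun R).1 hxy
  simp only [smul_eq_mul] at ht
  obtain ⟨b, c, hbc⟩ := isUnimodular_cons_iff.1 hy
  refine isUnimodular_cons_iff.2 ⟨b, fun i => c i - t i * b, ?_⟩
  have h1 : ∑ i, a i * (c i - t i * b) =
      (∑ i, a i * c i) - (∑ i, t i * a i) * b := by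
    rw [Finset.sum_mul, ← Finset.sum_sub_distrib]
    exact Finset.sum_congr rfl fun i _ => by ring
  rw [h1, ht]
  linear_combination hbc

lemma unimod_mul {x y : R} {a : Fin k → R}
    (hx : IsUnimodular (Fin.cons x a)) (hy : IsUnimodular (Fin.cons y a)) :
    IsUnimodular (Fin.cons (x * y) a) := by
  obtain ⟨b₁, c₁, h₁⟩ := isUnimodular_cons_iff.1 hx
  obtain ⟨b₂, c₂, h₂⟩ := isUnimodular_cons_iff.1 hy
  refine isUnimodular_cons_iff.2
    ⟨b₁ * b₂, fun i => c₁ i * (y * b₂ + ∑ j, a j * c₂ j) + c₂ i * (x * b₁), ?_⟩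
  have h3 : ∑ i, a i * (c₁ i * (y * b₂ + ∑ j, a j * c₂ j) + c₂ i * (x * b₁)) =
      (∑ i, a i * c₁ i) * (y * b₂ + ∑ j, a j * c₂ j) + (∑ i, a i * c₂ i) * (x * b₁) := by
    rw [Finset.sum_mul, Finset.sum_mul, ← Finset.sum_add_distrib]
    exact Finset.sum_congr rfl fun i _ => by ring
  rw [h3]
  linear_combination (y * b₂ + ∑ j, a j * c₂ j) * h₁ + h₂

lemma unimod_of_mul {x y : R} {a : Fin k → R}
    (hxy : IsUnimodular (Fin.cons (x * y) a)) : IsUnimodular (Fin.cons x a) := by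
  obtain ⟨b, c, h⟩ := isUnimodular_cons_iff.1 hxy
  exact isUnimodular_cons_iff.2 ⟨y * b, c, by linear_combination h⟩

lemma phi_step (φ : (Fin (k + 1) → R) → G) (h1 : MS1 φ) (z c : R) (a : Fin k → R) (i : Fin k)
    (hz : IsUnimodular (Fin.cons z a)) :
    φ (Fin.cons (z + c * a i) a) = φ (Fin.cons z a) := by
  have hε : IsElementary (Matrix.transvection i.succ 0 c) :=
    Submonoid.subset_closure ⟨i.succ, 0, c, Fin.succ_ne_zero i, rfl⟩
  have hv : Matrix.vecMul (Fin.cons z a) (Matrix.transvection i.succ 0 c)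
      = Fin.cons (z + c * a i) a := by
    funext l
    rw [Matrix.transvection, Matrix.vecMul_add, Matrix.vecMul_one]
    rcases Fin.eq_zero_or_eq_succ l with rfl | ⟨j, rfl⟩
    · simp [Matrix.vecMul, dotProduct, Matrix.single, Fin.sum_univ_succ, mul_comm]
    · simp [Matrix.vecMul, dotProduct, Matrix.single, Fin.sum_univ_succ,
        (Fin.succ_ne_zero j).symm]
  rw [← hv]
  exact h1 _ _ hz hε

lemma phi_congr (φ : (Fin (k + 1) → R) → G) (h1 : MS1 φ) {x y : R} {a : Fin k → R}
    (hxy : x - y ∈ Ideal.span (Set.range a)) (hy : IsUnimodular (Fin.cons y a)) :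
    φ (Fin.cons x a) = φ (Fin.cons y a) := by
  obtain ⟨t, ht⟩ := (Submodule.mem_span_range_iff_exists_fun R).1 hxy
  simp only [smul_eq_mul] at ht
  have key : ∀ s : Finset (Fin k), φ (Fin.cons (y + ∑ i ∈ s, t i * a i) a) = φ (Fin.cons y a) := by
    intro s
    induction s using Finset.induction_on with
    | empty => simp
    | @insert i s hns ih =>
      have hmem : (∑ j ∈ s, t j * a j) ∈ Ideal.span (Set.range a) :=
        Ideal.sum_mem _ fun j _ =>
          Ideal.mul_mem_left _ _ (Ideal.subset_span ⟨j, rfl⟩)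
      have hz : IsUnimodular (Fin.cons (y + ∑ j ∈ s, t j * a j) a) :=
        unimod_congr (by simpa using hmem) hy
      have e : y + ∑ j ∈ insert i s, t j * a j
          = (y + ∑ j ∈ s, t j * a j) + t i * a i := by
        rw [Finset.sum_insert hns]; ring
      rw [e, phi_step φ h1 _ (t i) a i hz, ih]
  have := key Finset.univ
  rw [ht] at this
  simpa using this

end Aux

/-- Under `MS1` and `MS4`, relation `MS3` implies relation `MS5`
(van der Kallen, Lemma 3.1, direction ⇒). -/
theorem ms3_implies_ms5 {R : Type*} [CommRing R] {G : Type*} [CommGroup G]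
    (k : ℕ) (hk : 1 ≤ k) (φ : (Fin (k + 1) → R) → G)
    (h1 : MS1 φ) (h4 : MS4 φ) (h3 : MS3 φ) : MS5 φ := by
  intro r q a hmem hr hp hq
  have m1 : (1 - r) * (1 + q) - 1 ∈ Ideal.span (Set.range a) := by
    have e : (1 - r) * (1 + q) - 1 = -(r * (1 + q) - q) := by ring
    rw [e]; exact neg_mem hmem
  have h1u : IsUnimodular (Fin.cons (1 : R) a) :=
    isUnimodular_cons_iff.2 ⟨1, 0, by simp⟩
  have hup : IsUnimodular (Fin.cons ((1 - r) * (1 + q)) a) := unimod_congr m1 h1u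
  have hu : IsUnimodular (Fin.cons (1 - r) a) := unimod_of_mul hup
  have hu2 : IsUnimodular (Fin.cons ((1 - r) ^ 2) a) := by
    have h := unimod_mul hu hu
    rwa [← pow_two] at h
  have hur : IsUnimodular (Fin.cons ((1 - r) * r) a) := unimod_mul hu hr
  have m2 : (1 - r) * r - (1 - r) ^ 2 * q ∈ Ideal.span (Set.range a) := by
    have h := Ideal.mul_mem_left _ (1 - r) hmem
    have e : (1 - r) * (r * (1 + q) - q) = (1 - r) * r - (1 - r) ^ 2 * q := by ring
    rwa [e] at h
  have hu2q : IsUnimodular (Fin.cons ((1 - r) ^ 2 * q) a) := unimod_mul hu2 hq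
  have m3 : (1 - r) ^ 2 * (1 + q) - (1 - r) ∈ Ideal.span (Set.range a) := by
    have h := Ideal.mul_mem_left _ (1 - r) m1
    have e : (1 - r) * ((1 - r) * (1 + q) - 1) = (1 - r) ^ 2 * (1 + q) - (1 - r) := by ring
    rwa [e] at h
  have hu2p : IsUnimodular (Fin.cons ((1 - r) ^ 2 * (1 + q)) a) := unimod_mul hu2 hp
  have E1 := h3 (1 - r) r a (by ring) hu hr hur
  have E2 : φ (Fin.cons ((1 - r) * r) a) = φ (Fin.cons ((1 - r) ^ 2 * q) a) :=
    phi_congr φ h1 m2 hu2q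
  have E3 := h4 (1 - r) q a hu2 hq hu2q
  have E4 := h4 (1 - r) (1 + q) a hu2 hp hu2p
  have E5 : φ (Fin.cons ((1 - r) ^ 2 * (1 + q)) a) = φ (Fin.cons (1 - r) a) :=
    phi_congr φ h1 m3 hu
  have hA : φ (Fin.cons ((1 - r) ^ 2) a) * φ (Fin.cons (1 + q) a)
      = φ (Fin.cons (1 - r) a) := E4.trans E5
  have hB : φ (Fin.cons (1 - r) a) * φ (Fin.cons r a)
      = φ (Fin.cons ((1 - r) ^ 2) a) * φ (Fin.cons q a) := by rw [E1, E2, ← E3]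
  refine mul_left_cancel (a := φ (Fin.cons ((1 - r) ^ 2) a)) ?_
  rw [mul_comm (φ (Fin.cons r a)) (φ (Fin.cons (1 + q) a)), ← mul_assoc, hA, hB]
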